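/- Let $Q$ be an involutory quandle, $a,b,c \in Q$ with $c \rhd a = c \rhd b$. Then for all $i, j \geq 0$: $a^{(ca)^i (ab)^j abc} = a^{(ca)^{i+1} (ba)^j b}$ (relation $\beta_{i,j}$). -/
import Mathlib


/-- An involutory quandle: `x ▷ x = x`, `(x ▷ y) ▷ y = x`, and right self-distributivity. -/
structure InvQuandle (Q : Type*) where
  act : Q → Q → Q
  idem : ∀ x, act x x = x
  invol : ∀ x y, act (act x y) y = x
  distrib : ∀ x y z, act (act x y) z = act (act x z) (act y z)

namespace InvQuandle

variable {Q : Type*}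

/-- Apply a word (list of quandle elements) to `z` on the right:
`apw R z [y₁,…,y_k] = ((z ▷ y₁) ▷ y₂) ⋯ ▷ y_k`. -/
def apw (R : InvQuandle Q) (z : Q) (w : List Q) : Q := w.foldl R.act z

/-- The word `w` repeated `n` times. -/
def wpow (w : List Q) : ℕ → List Q
  | 0 => []
  | n + 1 => w ++ wpow w n

end InvQuandle

open InvQuandle

lemma apw_append {Q : Type*} (R : InvQuandle Q) (z : Q) (u v : List Q) :
    R.apw z (u ++ v) = R.apw (R.apw z u) v := by
  simp [apw, List.foldl_append]

lemma wpow_comm {Q : Type*} (w : List Q) (n : ℕ) :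
    wpow w n ++ w = w ++ wpow w n := by
  induction n with
  | zero => simp [wpow]
  | succ n ih => simp only [wpow, List.append_assoc, ih]

/-- Pointwise: `x^{cab} = x^{abc}` when `c ▷ a = c ▷ b`. -/
lemma cab_eq_abc {Q : Type*} (R : InvQuandle Q) (a b c : Q)
    (h : R.act c a = R.act c b) (x : Q) :
    R.act (R.act (R.act x c) a) b = R.act (R.act (R.act x a) b) c := by
  have h1 : R.act (R.act x c) a = R.act (R.act x a) (R.act c a) := R.distrib x c a
  have h2 : R.act (R.act c a) b = c := by rw [h, R.invol]
  rw [h1, R.distrib, h2]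

/-- Pointwise: `x^{abca} = x^{caba}`. -/
lemma abca_eq_caba {Q : Type*} (R : InvQuandle Q) (a b c : Q)
    (h : R.act c a = R.act c b) (x : Q) :
    R.act (R.act (R.act (R.act x a) b) c) a = R.act (R.act (R.act (R.act x c) a) b) a := by
  rw [cab_eq_abc R a b c h x]

lemma key {Q : Type*} (R : InvQuandle Q) (a b c : Q)
    (h : R.act c a = R.act c b) (j : ℕ) (x : Q) :
    R.apw (R.apw x (wpow [a, b] j)) [a, b, c] =
    R.apw (R.apw (R.apw x [c, a]) (wpow [b, a] j)) [b] := by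
  induction j generalizing x with
  | zero =>
      show R.apw x [a, b, c] = R.apw (R.apw x [c, a]) [b]
      simp [apw, (cab_eq_abc R a b c h x).symm]
  | succ j ih =>
      rw [show wpow [a, b] (j + 1) = [a, b] ++ wpow [a, b] j from rfl, apw_append,
        show wpow [b, a] (j + 1) = [b, a] ++ wpow [b, a] j from rfl, apw_append, ih]
      congr 2
      show R.act (R.act (R.act (R.act x a) b) c) a
          = R.act (R.act (R.act (R.act x c) a) b) a
      exact abca_eq_caba R a b c h x

/-- relation $β_{i,j}$: if $c ▷ a = c ▷ b$ then
$a^{(ca)^i (ab)^j abc} = a^{(ca)^{i+1} (ba)^j b}$. -/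
theorem stmt13 {Q : Type*} (R : InvQuandle Q) (a b c : Q)
    (h : R.act c a = R.act c b) (i j : ℕ) :
    R.apw a (wpow [c, a] i ++ wpow [a, b] j ++ [a, b, c]) =
    R.apw a (wpow [c, a] (i + 1) ++ wpow [b, a] j ++ [b]) := by
  have e1 : wpow [c, a] (i + 1) = wpow [c, a] i ++ [c, a] := by
    show [c, a] ++ wpow [c, a] i = _
    rw [wpow_comm]
  rw [e1]
  simp only [apw_append]
  exact key R a b c h j _
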